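/- Let F̃ be a linear map on ℂᴺ with ‖F̃‖ ≤ L < 1 and set G = F̃ − I (invertible). Fix ε ∈ ℂᴺ, ε ≠ 0, and k ≥ 1; let Ũ and W̃ be the N×k matrices with columns ũ_j = F̃ʲ G ε and w̃_j = F̃ʲ G² ε, j = 0,…,k−1, and assume W̃ has full column rank k. Define s̃ − s := ε − Ũ W̃⁺ ũ₀ (the RRE error for the linear iteration started at s + ε). Then ‖G(s̃ − s)‖ = min { ‖g(F̃) G ε‖ : g a complex polynomial of degree at most k with g(1) = 1 }. -/

import Mathlib

open scoped Matrix Matrix.Norms.L2Operator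

/-- Moore–Penrose inverse of a full-column-rank matrix: `K⁺ = (KᴴK)⁻¹Kᴴ`. -/
noncomputable def pinv {m n : ℕ} (A : Matrix (Fin m) (Fin n) ℂ) : Matrix (Fin n) (Fin m) ℂ :=
  (Aᴴ * A)⁻¹ * Aᴴ

/-- A matrix acting on Euclidean vectors. -/
noncomputable def appE {m n : ℕ} (A : Matrix (Fin m) (Fin n) ℂ)
    (v : EuclideanSpace ℂ (Fin n)) : EuclideanSpace ℂ (Fin m) :=
  Matrix.toEuclideanLin A v

/-- The `N×k` matrix `U` with columns the first differences `u_{n+j} = x_{n+j+1} − x_{n+j}`,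
`j = 0,…,k−1`. -/
noncomputable def Umat (N k n : ℕ) (x : ℕ → EuclideanSpace ℂ (Fin N)) :
    Matrix (Fin N) (Fin k) ℂ :=
  Matrix.of fun p j => (x (n + (j : ℕ) + 1) - x (n + (j : ℕ))) p

/-- The `N×k` matrix `W` with columns the second differences
`w_{n+j} = u_{n+j+1} − u_{n+j}`, `j = 0,…,k−1`. -/
noncomputable def Wmat (N k n : ℕ) (x : ℕ → EuclideanSpace ℂ (Fin N)) :
    Matrix (Fin N) (Fin k) ℂ :=
  Matrix.of fun p j =>
    ((x (n + (j : ℕ) + 2) - x (n + (j : ℕ) + 1))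
      - (x (n + (j : ℕ) + 1) - x (n + (j : ℕ)))) p

/-- The `N×k` matrix `Ũ` with columns `ũ_{n+j} = F̃ʲ(F̃ − I) ε_n` coming from the linear
iteration `x̃_n = x_n`, `x̃_{m+1} = s + F̃(x̃_m − s)`. -/
noncomputable def UmatT (N k : ℕ)
    (F : EuclideanSpace ℂ (Fin N) →L[ℂ] EuclideanSpace ℂ (Fin N))
    (ε : EuclideanSpace ℂ (Fin N)) : Matrix (Fin N) (Fin k) ℂ :=
  Matrix.of fun p j => ((F ^ (j : ℕ) * (F - 1)) ε) p

/-- The `N×k` matrix `W̃` with columns `w̃_{n+j} = F̃ʲ(F̃ − I)² ε_n` coming from the linear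
iteration `x̃_n = x_n`, `x̃_{m+1} = s + F̃(x̃_m − s)`. -/
noncomputable def WmatT (N k : ℕ)
    (F : EuclideanSpace ℂ (Fin N) →L[ℂ] EuclideanSpace ℂ (Fin N))
    (ε : EuclideanSpace ℂ (Fin N)) : Matrix (Fin N) (Fin k) ℂ :=
  Matrix.of fun p j =>
    ((F ^ (j : ℕ) * (F - 1) ^ 2 :
      EuclideanSpace ℂ (Fin N) →L[ℂ] EuclideanSpace ℂ (Fin N)) ε) p

/-- The RRE approximation `s_{n,k} = x_n − U W⁺ u_n`. -/
noncomputable def sRRE (N k n : ℕ) (x : ℕ → EuclideanSpace ℂ (Fin N)) :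
    EuclideanSpace ℂ (Fin N) :=
  x n - appE (Umat N k n x) (appE (pinv (Wmat N k n x)) (x (n + 1) - x n))

/-- The RRE approximation `s̃_{n,k} = x_n − Ũ W̃⁺ ũ_n` for the linear iteration
`x̃_n = x_n`, `x̃_{m+1} = s + F̃(x̃_m − s)`, whose first difference at `n` is
`ũ_n = (F̃ − I)(x_n − s)`. -/
noncomputable def sRREt (N k n : ℕ)
    (F : EuclideanSpace ℂ (Fin N) →L[ℂ] EuclideanSpace ℂ (Fin N))
    (s : EuclideanSpace ℂ (Fin N)) (x : ℕ → EuclideanSpace ℂ (Fin N)) :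
    EuclideanSpace ℂ (Fin N) :=
  x n - appE (UmatT N k F (x n - s))
    (appE (pinv (WmatT N k F (x n - s))) ((F - 1) (x n - s)))

/-- Let `F̃` be a linear map on `ℂᴺ` with `‖F̃‖ ≤ L < 1`,
`G = F̃ − I`, `ε ≠ 0`, `k ≥ 1`; let `Ũ, W̃` have columns `F̃ʲGε`, `F̃ʲG²ε`,
with `W̃` of full column rank `k`, and let `s̃ − s = ε − Ũ W̃⁺ (Gε)`. Then
`‖G(s̃ − s)‖ = min {‖g(F̃) G ε‖ : deg g ≤ k, g(1) = 1}`. -/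
lemma appE_apply {m n : ℕ} (A : Matrix (Fin m) (Fin n) ℂ) (v : EuclideanSpace ℂ (Fin n))
    (p : Fin m) : appE A v p = ∑ j, A p j * v j := rfl

lemma appE_mul {m n o : ℕ} (A : Matrix (Fin m) (Fin n) ℂ) (B : Matrix (Fin n) (Fin o) ℂ)
    (v : EuclideanSpace ℂ (Fin o)) : appE A (appE B v) = appE (A * B) v := by
  ext p
  simp only [appE, Matrix.toEuclideanLin_apply]
  simp [Matrix.mulVec_mulVec]

lemma appE_sub {m n : ℕ} (A B : Matrix (Fin m) (Fin n) ℂ) (v : EuclideanSpace ℂ (Fin n)) :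
    appE (A - B) v = appE A v - appE B v := by
  simp [appE, map_sub]

lemma appE_add_vec {m n : ℕ} (A : Matrix (Fin m) (Fin n) ℂ) (v w : EuclideanSpace ℂ (Fin n)) :
    appE A (v + w) = appE A v + appE A w := by
  simp [appE, map_add]

variable {N k : ℕ}
  (F : EuclideanSpace ℂ (Fin N) →L[ℂ] EuclideanSpace ℂ (Fin N))
  (ε : EuclideanSpace ℂ (Fin N))

lemma appE_col_sum {m n : ℕ} (A : Matrix (Fin m) (Fin n) ℂ) (c : EuclideanSpace ℂ (Fin n)) :
    appE A c = ∑ j : Fin n, c j • (WithLp.toLp 2 (fun p => A p j) : EuclideanSpace ℂ (Fin m)) := by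
  ext p
  rw [appE_apply]
  rw [show (∑ j : Fin n, c j • (WithLp.toLp 2 (fun p => A p j) : EuclideanSpace ℂ (Fin m))) p
      = ∑ j : Fin n, c j * A p j from by
    induction (Finset.univ : Finset (Fin n)) using Finset.induction with
    | empty => simp
    | insert _ _ h ih =>
        rw [Finset.sum_insert h, Finset.sum_insert h, ← ih]
        rfl]
  exact Finset.sum_congr rfl fun j _ => mul_comm _ _

lemma appE_U_sum (c : EuclideanSpace ℂ (Fin k)) :
    appE (UmatT N k F ε) c = ∑ j : Fin k, c j • ((F ^ (j : ℕ) * (F - 1)) ε) := by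
  rw [appE_col_sum]; rfl

lemma appE_W_sum (c : EuclideanSpace ℂ (Fin k)) :
    appE (WmatT N k F ε) c
      = ∑ j : Fin k, c j • ((F ^ (j : ℕ) * (F - 1) ^ 2 :
          EuclideanSpace ℂ (Fin N) →L[ℂ] EuclideanSpace ℂ (Fin N)) ε) := by
  rw [appE_col_sum]; rfl

lemma G_commute_pow (j : ℕ) : (F - 1) * F ^ j = F ^ j * (F - 1) :=
  (((Commute.refl F).sub_left (Commute.one_left F)).pow_right j).eq

lemma G_appE_U (c : EuclideanSpace ℂ (Fin k)) :
    (F - 1) (appE (UmatT N k F ε) c) = appE (WmatT N k F ε) c := by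
  rw [appE_U_sum, appE_W_sum, map_sum]
  refine Finset.sum_congr rfl fun j _ => ?_
  rw [map_smul]
  congr 1
  have : (F - 1) ((F ^ (j : ℕ) * (F - 1)) ε) = ((F - 1) * (F ^ (j : ℕ) * (F - 1))) ε := rfl
  rw [this, ← mul_assoc, G_commute_pow, mul_assoc, ← sq]

open Polynomial in
lemma aeval_sum_apply (q : Polynomial ℂ) (hq : q.natDegree < k) :
    (Polynomial.aeval F q :
        EuclideanSpace ℂ (Fin N) →L[ℂ] EuclideanSpace ℂ (Fin N)) ((F - 1) ε)
      = ∑ j : Fin k, q.coeff j • (F ^ (j : ℕ)) ((F - 1) ε) := by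
  rw [Polynomial.aeval_eq_sum_range' hq, ← Finset.sum_range
    (fun j => q.coeff j • (F ^ j) ((F - 1) ε))]
  rw [ContinuousLinearMap.sum_apply]
  exact Finset.sum_congr rfl fun j _ => rfl

lemma sum_pow_apply_eq (c : Fin k → ℂ) :
    (F - 1) (∑ j : Fin k, c j • (F ^ (j : ℕ)) ((F - 1) ε))
      = appE (WmatT N k F ε) (WithLp.toLp 2 c) := by
  rw [map_sum, appE_W_sum]
  refine Finset.sum_congr rfl fun j _ => ?_
  rw [map_smul]
  congr 1
  have : (F - 1) ((F ^ (j : ℕ)) ((F - 1) ε)) = ((F - 1) * (F ^ (j : ℕ) * (F - 1))) ε := rfl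
  rw [this, ← mul_assoc, G_commute_pow, mul_assoc, ← sq]

open Polynomial in
lemma aeval_decomp (hk : 1 ≤ k) (g : Polynomial ℂ) (hdeg : g.natDegree ≤ k)
    (h1 : g.eval 1 = 1) :
    ∃ c : EuclideanSpace ℂ (Fin k),
      (Polynomial.aeval F g :
          EuclideanSpace ℂ (Fin N) →L[ℂ] EuclideanSpace ℂ (Fin N)) ((F - 1) ε)
        = (F - 1) ε + appE (WmatT N k F ε) c := by
  obtain ⟨q, hq⟩ := Polynomial.X_sub_C_dvd_sub_C_eval (a := (1 : ℂ)) (p := g)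
  rw [h1] at hq
  have hqnd : q.natDegree < k := by
    rcases eq_or_ne q 0 with h0 | h0
    · simp only [h0, natDegree_zero]; omega
    · have hXC : (X - C (1:ℂ)) ≠ 0 := X_sub_C_ne_zero 1
      have : ((X - C (1:ℂ)) * q).natDegree = 1 + q.natDegree := by
        rw [natDegree_mul hXC h0, natDegree_X_sub_C]
      have hle : ((X - C (1:ℂ)) * q).natDegree ≤ k := by
        rw [← hq]
        calc (g - C 1).natDegree ≤ max g.natDegree (C (1:ℂ)).natDegree :=
              natDegree_sub_le _ _
          _ ≤ k := by simpa [natDegree_C] using hdeg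
      omega
  refine ⟨WithLp.toLp 2 (fun j : Fin k => q.coeff j), ?_⟩
  have hg : g = 1 + (X - C 1) * q := by
    rw [← hq]; simp
  rw [hg, map_add, map_one, map_mul, map_sub, aeval_X, aeval_C, map_one]
  have : ((1 + (F - 1) * (aeval F q : EuclideanSpace ℂ (Fin N) →L[ℂ] EuclideanSpace ℂ (Fin N)))) ((F - 1) ε)
      = (F - 1) ε + (F - 1) ((aeval F q : EuclideanSpace ℂ (Fin N) →L[ℂ] EuclideanSpace ℂ (Fin N)) ((F - 1) ε)) := rfl
  rw [this, aeval_sum_apply F ε q hqnd, sum_pow_apply_eq]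

lemma appE_vec_sub {m n : ℕ} (A : Matrix (Fin m) (Fin n) ℂ) (v w : EuclideanSpace ℂ (Fin n)) :
    appE A (v - w) = appE A v - appE A w := map_sub (Matrix.toEuclideanLin A) v w

open scoped ComplexOrder in
lemma WHW_isUnit {m n : ℕ} (W : Matrix (Fin m) (Fin n) ℂ) (h : W.rank = n) :
    IsUnit (Wᴴ * W) := by
  have hr : (Wᴴ * W).rank = n := by rw [Matrix.rank_conjTranspose_mul_self, h]
  have hsurj : Function.Surjective ((Wᴴ * W).mulVec) := by
    have htop : LinearMap.range (Wᴴ * W).mulVecLin = ⊤ := by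
      apply Submodule.eq_top_of_finrank_eq
      rw [show Module.finrank ℂ (LinearMap.range (Wᴴ * W).mulVecLin) = (Wᴴ * W).rank from rfl,
        hr]
      simp
    intro y
    obtain ⟨x, hx⟩ := LinearMap.range_eq_top.mp htop y
    exact ⟨x, hx⟩
  exact Matrix.mulVec_surjective_iff_isUnit.mp hsurj

lemma pinv_residual {m n : ℕ} (W : Matrix (Fin m) (Fin n) ℂ) (h : IsUnit (Wᴴ * W))
    (v : EuclideanSpace ℂ (Fin m)) :
    appE Wᴴ (v - appE W (appE (pinv W) v)) = 0 := by
  rw [appE_vec_sub, appE_mul, appE_mul]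
  have hdet : IsUnit (Wᴴ * W).det := (Matrix.isUnit_iff_isUnit_det _).mp h
  have hmat : (Wᴴ * W) * pinv W = Wᴴ := by
    rw [pinv, ← Matrix.mul_assoc, Matrix.mul_nonsing_inv _ hdet, Matrix.one_mul]
  rw [hmat, sub_self]

lemma inner_W_residual {m n : ℕ} (W : Matrix (Fin m) (Fin n) ℂ)
    (e : EuclideanSpace ℂ (Fin m)) (he : appE Wᴴ e = 0) (c : EuclideanSpace ℂ (Fin n)) :
    (inner ℂ (appE W c) e : ℂ) = 0 := by
  have hadj : appE Wᴴ e = LinearMap.adjoint (Matrix.toEuclideanLin W) e := by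
    rw [appE, Matrix.toEuclideanLin_conjTranspose_eq_adjoint]
  have : (inner ℂ (appE W c) e : ℂ) = inner ℂ c (LinearMap.adjoint (Matrix.toEuclideanLin W) e) :=
    (LinearMap.adjoint_inner_right _ _ _).symm
  rw [this, ← hadj, he, inner_zero_right]

lemma norm_le_of_orth {m : ℕ} (e w : EuclideanSpace ℂ (Fin m))
    (h : (inner ℂ w e : ℂ) = 0) : ‖e‖ ≤ ‖e + w‖ := by
  have h' : (inner ℂ e w : ℂ) = 0 := inner_eq_zero_symm.mpr h
  have hsq : ‖e + w‖ ^ 2 = ‖e‖ ^ 2 + ‖w‖ ^ 2 := by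
    rw [norm_add_sq (𝕜 := ℂ), h']
    simp
  nlinarith [norm_nonneg (e + w), norm_nonneg e, norm_nonneg w, sq_nonneg ‖w‖]


theorem rre_linear_residual_minimization (N k : ℕ) (hk : 1 ≤ k) (L : ℝ) (hL1 : L < 1)
    (F : EuclideanSpace ℂ (Fin N) →L[ℂ] EuclideanSpace ℂ (Fin N)) (hF : ‖F‖ ≤ L)
    (ε : EuclideanSpace ℂ (Fin N)) (hε : ε ≠ 0)
    (hWt : (WmatT N k F ε).rank = k) :
    IsLeast
      {r : ℝ | ∃ g : Polynomial ℂ, g.natDegree ≤ k ∧ g.eval 1 = 1 ∧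
        r = ‖(Polynomial.aeval F g :
          EuclideanSpace ℂ (Fin N) →L[ℂ] EuclideanSpace ℂ (Fin N)) ((F - 1) ε)‖}
      ‖(F - 1) (ε - appE (UmatT N k F ε) (appE (pinv (WmatT N k F ε)) ((F - 1) ε)))‖ := by
  set W := WmatT N k F ε with hW
  set v : EuclideanSpace ℂ (Fin N) := (F - 1) ε with hv
  set c₀ : EuclideanSpace ℂ (Fin k) := appE (pinv W) v with hc₀
  have htarget : (F - 1) (ε - appE (UmatT N k F ε) c₀) = v - appE W c₀ := by
    rw [map_sub, G_appE_U]
  have hUnit : IsUnit (Wᴴ * W) := WHW_isUnit W hWt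
  have hres : appE Wᴴ (v - appE W c₀) = 0 := pinv_residual W hUnit v
  constructor
  · refine ⟨1 + (Polynomial.X - Polynomial.C 1)
      * ∑ j : Fin k, Polynomial.C (-(c₀ j)) * Polynomial.X ^ (j : ℕ), ?_, ?_, ?_⟩
    · have hqdeg : (∑ j : Fin k,
          Polynomial.C (-(c₀ j)) * Polynomial.X ^ (j : ℕ)).natDegree ≤ k - 1 :=
        Polynomial.natDegree_sum_le_of_forall_le _ _ fun j _ =>
          (Polynomial.natDegree_C_mul_X_pow_le _ _).trans (Nat.le_sub_one_of_lt j.isLt)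
      calc (1 + (Polynomial.X - Polynomial.C 1)
            * ∑ j : Fin k, Polynomial.C (-(c₀ j)) * Polynomial.X ^ (j : ℕ)).natDegree
          ≤ max (1 : Polynomial ℂ).natDegree ((Polynomial.X - Polynomial.C 1)
            * ∑ j : Fin k, Polynomial.C (-(c₀ j)) * Polynomial.X ^ (j : ℕ)).natDegree :=
            Polynomial.natDegree_add_le _ _
        _ ≤ k := by
            have := Polynomial.natDegree_mul_le (p := Polynomial.X - Polynomial.C (1:ℂ))
              (q := ∑ j : Fin k, Polynomial.C (-(c₀ j)) * Polynomial.X ^ (j : ℕ))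
            rw [Polynomial.natDegree_X_sub_C] at this
            simp only [Polynomial.natDegree_one]
            omega
    · simp
    · rw [htarget, map_add, map_one, map_mul, map_sub, Polynomial.aeval_X,
        Polynomial.aeval_C, map_one]
      have happ : ((1 + (F - 1) * (Polynomial.aeval F
            (∑ j : Fin k, Polynomial.C (-(c₀ j)) * Polynomial.X ^ (j : ℕ)) :
            EuclideanSpace ℂ (Fin N) →L[ℂ] EuclideanSpace ℂ (Fin N)))) v
          = v + (F - 1) ((Polynomial.aeval F
            (∑ j : Fin k, Polynomial.C (-(c₀ j)) * Polynomial.X ^ (j : ℕ)) :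
            EuclideanSpace ℂ (Fin N) →L[ℂ] EuclideanSpace ℂ (Fin N)) v) := rfl
      rw [happ]
      have hqv : (Polynomial.aeval F
            (∑ j : Fin k, Polynomial.C (-(c₀ j)) * Polynomial.X ^ (j : ℕ)) :
            EuclideanSpace ℂ (Fin N) →L[ℂ] EuclideanSpace ℂ (Fin N)) v
          = ∑ j : Fin k, (-(c₀ j)) • (F ^ (j : ℕ)) v := by
        rw [map_sum, ContinuousLinearMap.sum_apply]
        refine Finset.sum_congr rfl fun j _ => ?_
        rw [map_mul, Polynomial.aeval_C, Polynomial.aeval_X_pow]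
        show (algebraMap ℂ _ (-(c₀ j)) * F ^ (j : ℕ)) v = _
        rw [Algebra.algebraMap_eq_smul_one, smul_mul_assoc, one_mul]
        rfl
      rw [hqv, hv, sum_pow_apply_eq F ε (fun j => -(c₀ j))]
      have : appE W (WithLp.toLp 2 (fun j => -(c₀ j))) = -appE W c₀ := by
        have : (WithLp.toLp 2 (fun j => -(c₀ j)) : EuclideanSpace ℂ (Fin k)) = -c₀ := rfl
        rw [this, show appE W (-c₀) = -appE W c₀ from map_neg (Matrix.toEuclideanLin W) c₀]
      rw [this, sub_eq_add_neg]
  · rintro r ⟨g, hdeg, h1, rfl⟩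
    obtain ⟨c, hc⟩ := aeval_decomp F ε hk g hdeg h1
    rw [hc, htarget]
    have hsplit : v + appE W c = (v - appE W c₀) + appE W (c₀ + c) := by
      rw [appE_add_vec]; abel
    rw [hsplit]
    exact norm_le_of_orth _ _ (inner_W_residual W _ hres _)
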